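/- Let X be a nonnegative random variable with P(X > t) ≤ 8 d² exp(−c K min{t, t²}) for all t ≥ 0. If ε ∈ (0,1) and K ≥ max{ε^{-2}, 8/(cε), 2 log d/(c ε²)}, then E X² ≤ 6ε. -/

import Mathlib

open MeasureTheory Real Set

lemma quartic_le_exp {x : ℝ} (hx : 0 ≤ x) : x ^ 4 / 24 ≤ exp x := by
  have h := Real.sum_le_exp_of_nonneg hx 5
  have heq : ∑ i ∈ Finset.range 5, x ^ i / i.factorial
      = 1 + x + x ^ 2 / 2 + x ^ 3 / 6 + x ^ 4 / 24 := by
    rw [Finset.sum_range_succ, Finset.sum_range_succ, Finset.sum_range_succ,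
      Finset.sum_range_succ, Finset.sum_range_one]
    norm_num [Nat.factorial]
  rw [heq] at h
  nlinarith [sq_nonneg x, pow_nonneg hx 3]

lemma exp_neg_le_quartic {y : ℝ} (hy : 0 < y) : exp (-y) ≤ 24 / y ^ 4 := by
  rw [Real.exp_neg]
  have h1 : (y ^ 4 / 24)⁻¹ = 24 / y ^ 4 := by
    rw [inv_div]
  rw [← h1]
  exact inv_anti₀ (by positivity) (quartic_le_exp hy.le)

lemma seven_le_exp_two : (7:ℝ) ≤ exp 2 := by
  have h := Real.sum_le_exp_of_nonneg (show (0:ℝ) ≤ 2 by norm_num) 5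
  have heq : ∑ i ∈ Finset.range 5, (2:ℝ) ^ i / i.factorial = 7 := by
    rw [Finset.sum_range_succ, Finset.sum_range_succ, Finset.sum_range_succ,
      Finset.sum_range_succ, Finset.sum_range_one]
    norm_num [Nat.factorial]
  linarith [heq ▸ h]

lemma exp_neg_two_div_eps {ε : ℝ} (hε0 : 0 < ε) (hε1 : ε < 1) :
    exp (-(2 / ε)) ≤ ε ^ 2 / 7 := by
  have hlog : 1 - ε⁻¹ ≤ Real.log ε := by
    have := Real.log_le_sub_one_of_pos (show (0:ℝ) < ε⁻¹ by positivity)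
    rw [Real.log_inv] at this
    linarith
  have step : exp (-(2 / ε)) ≤ exp (-2) * ε ^ 2 := by
    have h1 : exp (-(2 / ε)) ≤ exp (-2 + 2 * Real.log ε) := by
      apply Real.exp_le_exp.2
      have h2 : 2 / ε = 2 * ε⁻¹ := by ring
      rw [h2]; nlinarith
    have h2 : exp (-2 + 2 * Real.log ε) = exp (-2) * ε ^ 2 := by
      rw [Real.exp_add, two_mul, Real.exp_add, Real.exp_log hε0]
      ring
    linarith
  have h7 : exp (-2) ≤ 1 / 7 := by
    rw [Real.exp_neg]
    rw [show (1:ℝ)/7 = 7⁻¹ by norm_num]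
    exact inv_anti₀ (by norm_num) seven_le_exp_two
  nlinarith [sq_nonneg ε, Real.exp_pos (-(2/ε))]

lemma Gbound_aux {ε : ℝ} (hε0 : 0 < ε) (s : ℝ) (hs0 : 0 < s) :
    8 * exp (-(4 * min (Real.sqrt s) s / ε)) ≤
      8 * exp (-(4 / ε * s)) + (12 * exp (-(2 / ε)) * ε ^ 4) * s ^ (-2 : ℝ) := by
  have hrpow : s ^ (-2:ℝ) = (s ^ 2)⁻¹ := by
    rw [show ((-2:ℝ)) = -(2:ℝ) by norm_num, Real.rpow_neg hs0.le,
      show (2:ℝ) = ((2:ℕ):ℝ) by norm_num, Real.rpow_natCast]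
  by_cases h1s : s ≤ 1
  · have hmin : min (Real.sqrt s) s = s :=
      min_eq_right ((Real.le_sqrt hs0.le hs0.le).2 (by nlinarith))
    have hE2 : 0 ≤ (12 * exp (-(2 / ε)) * ε ^ 4) * s ^ (-2:ℝ) := by
      rw [hrpow]; positivity
    have heq : 8 * exp (-(4 * min (Real.sqrt s) s / ε)) = 8 * exp (-(4 / ε * s)) := by
      rw [hmin]; ring_nf
    linarith
  · push_neg at h1s
    have hsq : Real.sqrt s ≤ s := by
      calc Real.sqrt s ≤ Real.sqrt (s ^ 2) := Real.sqrt_le_sqrt (by nlinarith)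
      _ = s := Real.sqrt_sq hs0.le
    have hmin : min (Real.sqrt s) s = Real.sqrt s := min_eq_left hsq
    have hy1 : 1 ≤ Real.sqrt s := Real.one_le_sqrt.2 h1s.le
    have hy2 : Real.sqrt s ^ 2 = s := Real.sq_sqrt hs0.le
    set y := Real.sqrt s with hydef
    have hy0 : 0 < y := lt_of_lt_of_le one_pos hy1
    have key : exp (-(4 * y / ε)) ≤ exp (-(2 / ε)) * (3 / 2 * ε ^ 4 / s ^ 2) := by
      have hsplit : -(4 * y / ε) = -(2 * y / ε) + -(2 * y / ε) := by ring
      rw [hsplit, Real.exp_add]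
      have ha : exp (-(2 * y / ε)) ≤ exp (-(2 / ε)) := by
        apply Real.exp_le_exp.2
        rw [neg_le_neg_iff, div_le_div_iff₀ hε0 hε0]
        nlinarith
      have hb : exp (-(2 * y / ε)) ≤ 3 / 2 * ε ^ 4 / s ^ 2 := by
        have hypos : 0 < 2 * y / ε := by positivity
        have h24 : exp (-(2 * y / ε)) ≤ 24 / (2 * y / ε) ^ 4 := exp_neg_le_quartic hypos
        have hval : 24 / (2 * y / ε) ^ 4 = 3 / 2 * ε ^ 4 / s ^ 2 := by
          rw [← hy2]
          field_simp
          ring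
        rw [hval] at h24
        exact h24
      exact mul_le_mul ha hb (Real.exp_pos _).le (Real.exp_pos _).le
    have hmain : 8 * exp (-(4 * y / ε)) ≤ (12 * exp (-(2 / ε)) * ε ^ 4) * s ^ (-2:ℝ) := by
      rw [hrpow]
      calc 8 * exp (-(4 * y / ε)) ≤ 8 * (exp (-(2 / ε)) * (3 / 2 * ε ^ 4 / s ^ 2)) := by
            linarith
      _ = 12 * exp (-(2 / ε)) * ε ^ 4 * (s ^ 2)⁻¹ := by ring
    have hE1 : 0 ≤ 8 * exp (-(4 / ε * s)) := by positivity
    rw [hmin]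
    linarith

set_option maxHeartbeats 2000000 in
theorem tail_bound_second_moment {Ω : Type*} [MeasurableSpace Ω]
    (μ : Measure Ω) [IsProbabilityMeasure μ]
    (X : Ω → ℝ) (hX_nonneg : ∀ ω, 0 ≤ X ω) (hX_int : Integrable X μ) (hX2_int : Integrable (fun ω => (X ω) ^ 2) μ)
    (d : ℕ) (hd : 1 ≤ d) (c K : ℝ) (hc : 0 < c) (hK : 0 < K)
    (htail : ∀ t : ℝ, 0 ≤ t →
      (μ {ω | t < X ω}).toReal ≤ 8 * (d : ℝ) ^ 2 * exp (-(c * K * min t (t ^ 2))))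
    (ε : ℝ) (hε : ε ∈ Set.Ioo (0:ℝ) 1)
    (hKbig : max (ε⁻¹ ^ 2) (max (8 / (c * ε)) (2 * Real.log d / (c * ε ^ 2))) ≤ K) :
    ∫ ω, (X ω) ^ 2 ∂μ ≤ 6 * ε := by
  obtain ⟨hε0, hε1⟩ := hε
  set L := Real.log d with hLdef
  have hdpos : (0:ℝ) < d := by exact_mod_cast hd
  have hL : 0 ≤ L := Real.log_nonneg (by exact_mod_cast hd)
  have h1 : 8 ≤ c * K * ε := by
    have h := le_trans (le_trans (le_max_left _ _) (le_max_right _ _)) hKbig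
    rw [div_le_iff₀ (by positivity)] at h
    nlinarith
  have h2 : 2 * L ≤ c * K * ε ^ 2 := by
    have h := le_trans (le_trans (le_max_right _ _) (le_max_right _ _)) hKbig
    rw [div_le_iff₀ (by positivity)] at h
    nlinarith
  set s₀ : ℝ := max (2 * ε ^ 2) (4 * ε ^ 4) with hs₀def
  have hs₀pos : 0 < s₀ := lt_max_of_lt_left (by positivity)
  have hs₀ge : 2 * ε ^ 2 ≤ s₀ := le_max_left _ _
  have hs₀ge' : 4 * ε ^ 4 ≤ s₀ := le_max_right _ _
  have hε2le : ε ^ 2 ≤ 1 := by nlinarith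
  have hs₀le : s₀ ≤ 4 * ε ^ 2 := by
    apply max_le (by nlinarith)
    nlinarith [sq_nonneg (ε^2)]
  set G : ℝ → ℝ := fun s => 8 * exp (-(4 * min (Real.sqrt s) s / ε)) with hGdef
  set B : ℝ → ℝ := fun s => if s ≤ s₀ then 1 else G s with hBdef
  set E1 : ℝ → ℝ := fun s => 8 * exp (-(4 / ε * s)) with hE1def
  set E2 : ℝ → ℝ := fun s => (12 * exp (-(2 / ε)) * ε ^ 4) * s ^ (-2 : ℝ) with hE2def
  have hGcont : Continuous G := by
    apply continuous_const.mul
    exact Real.continuous_exp.comp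
      (((continuous_const.mul (Real.continuous_sqrt.min continuous_id)).div_const ε).neg)
  have hE1int : IntegrableOn E1 (Ioi s₀) := by
    have h := (exp_neg_integrableOn_Ioi s₀ (by positivity : (0:ℝ) < 4 / ε)).const_mul (8:ℝ)
    exact IntegrableOn.congr_fun h (fun s _ => by simp [hE1def, neg_mul]) measurableSet_Ioi
  have hE2int : IntegrableOn E2 (Ioi s₀) :=
    (integrableOn_Ioi_rpow_of_lt (by norm_num) hs₀pos).const_mul _
  have hGbound : ∀ s ∈ Ioi s₀, G s ≤ E1 s + E2 s := fun s hs =>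
    Gbound_aux hε0 s (hs₀pos.trans (mem_Ioi.1 hs))
  have hGnonneg : ∀ s, 0 ≤ G s := fun s => by positivity
  have hGint : IntegrableOn G (Ioi s₀) := by
    apply Integrable.mono' (hE1int.add hE2int) hGcont.aestronglyMeasurable
    filter_upwards [ae_restrict_mem measurableSet_Ioi] with s hs
    rw [Real.norm_eq_abs, abs_of_nonneg (hGnonneg s)]
    exact hGbound s hs
  have hBint1 : IntegrableOn B (Ioc 0 s₀) := by
    have hc1 : IntegrableOn (fun _ => (1:ℝ)) (Ioc 0 s₀) volume :=
      integrableOn_const measure_Ioc_lt_top.ne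
    exact IntegrableOn.congr_fun hc1 (fun s hs => by simp [hBdef, hs.2]) measurableSet_Ioc
  have hBint2 : IntegrableOn B (Ioi s₀) := by
    exact IntegrableOn.congr_fun hGint
      (fun s hs => by simp [hBdef, not_le.2 (mem_Ioi.1 hs)]) measurableSet_Ioi
  have hBint : IntegrableOn B (Ioi 0) := by
    rw [← Set.Ioc_union_Ioi_eq_Ioi hs₀pos.le]
    exact hBint1.union hBint2
  rw [hX2_int.integral_eq_integral_meas_lt
    (Filter.Eventually.of_forall fun ω => sq_nonneg (X ω))]
  have hle : ∀ s ∈ Ioi (0:ℝ), (μ {a | s < X a ^ 2}).toReal ≤ B s := by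
    intro s hs
    rw [mem_Ioi] at hs
    by_cases hss : s ≤ s₀
    · simp only [hBdef, if_pos hss]
      exact ENNReal.toReal_le_of_le_ofReal zero_le_one (by simpa using prob_le_one)
    · push_neg at hss
      simp only [hBdef, if_neg (not_le.2 hss)]
      have hset : {a | s < X a ^ 2} = {a | Real.sqrt s < X a} := by
        ext a
        simp only [mem_setOf_eq]
        constructor
        · intro h
          have hXpos : 0 < X a := by nlinarith [hX_nonneg a]
          exact (Real.sqrt_lt' hXpos).2 h
        · intro h
          have hXpos : 0 < X a := lt_of_le_of_lt (Real.sqrt_nonneg s) h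
          exact (Real.sqrt_lt' hXpos).1 h
      rw [hset]
      refine (htail (Real.sqrt s) (Real.sqrt_nonneg s)).trans ?_
      rw [Real.sq_sqrt hs.le]
      set m := min (Real.sqrt s) s with hmdef
      have hm0 : 0 ≤ m := le_min (Real.sqrt_nonneg s) hs.le
      have hm1 : 2 * ε ^ 2 ≤ m := by
        apply le_min
        · have h4 : Real.sqrt (4 * ε ^ 4) ≤ Real.sqrt s :=
            Real.sqrt_le_sqrt (le_of_lt (lt_of_le_of_lt hs₀ge' hss))
          rw [show (4 * ε ^ 4 : ℝ) = (2 * ε ^ 2) ^ 2 by ring,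
            Real.sqrt_sq (by positivity)] at h4
          exact h4
        · linarith [lt_of_le_of_lt hs₀ge hss]
      have hd2 : ((d:ℝ)) ^ 2 = exp (2 * L) := by
        rw [hLdef, two_mul, Real.exp_add, Real.exp_log hdpos]
        ring
      have hexp : exp (2 * L) * exp (-(c * K * m)) ≤ exp (-(4 * m / ε)) := by
        rw [← Real.exp_add, Real.exp_le_exp]
        have hgoal : 4 * m + 2 * L * ε ≤ c * K * m * ε := by
          nlinarith [mul_nonneg hm0 (sub_nonneg.2 h1),
            mul_nonneg (mul_nonneg hε0.le (mul_nonneg hc.le hK.le)) (sub_nonneg.2 hm1),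
            mul_nonneg hε0.le (sub_nonneg.2 h2)]
        rw [show -(4 * m / ε) = (-(4 * m)) / ε by ring, le_div_iff₀ hε0]
        nlinarith
      calc 8 * (d:ℝ) ^ 2 * exp (-(c * K * m)) = 8 * (exp (2 * L) * exp (-(c * K * m))) := by
            rw [hd2]; ring
      _ ≤ 8 * exp (-(4 * m / ε)) := by linarith
  have step1 : ∫ s in Ioi (0:ℝ), (μ {a | s < X a ^ 2}).toReal ≤ ∫ s in Ioi (0:ℝ), B s := by
    apply integral_mono_of_nonneg
    · exact Filter.Eventually.of_forall fun s => ENNReal.toReal_nonneg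
    · exact hBint
    · filter_upwards [ae_restrict_mem measurableSet_Ioi] with s hs using hle s hs
  refine step1.trans ?_
  have split : ∫ s in Ioi (0:ℝ), B s = (∫ s in Ioc 0 s₀, B s) + ∫ s in Ioi s₀, B s := by
    rw [← Set.Ioc_union_Ioi_eq_Ioi hs₀pos.le]
    exact setIntegral_union (Set.Ioc_disjoint_Ioi le_rfl) measurableSet_Ioi hBint1 hBint2
  rw [split]
  have int1 : ∫ s in Ioc (0:ℝ) s₀, B s = s₀ := by
    rw [setIntegral_congr_fun measurableSet_Ioc (g := fun _ => (1:ℝ))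
      (fun s hs => by simp [hBdef, hs.2])]
    simp [Real.volume_Ioc, ENNReal.toReal_ofReal hs₀pos.le]
    exact hs₀pos.le
  have int2 : ∫ s in Ioi s₀, B s ≤ (∫ s in Ioi s₀, E1 s) + ∫ s in Ioi s₀, E2 s := by
    rw [setIntegral_congr_fun measurableSet_Ioi (g := G)
      (fun s hs => by simp [hBdef, not_le.2 (mem_Ioi.1 hs)])]
    rw [← integral_add hE1int hE2int]
    exact setIntegral_mono_on hGint (hE1int.add hE2int) measurableSet_Ioi hGbound
  have intE1 : ∫ s in Ioi s₀, E1 s = 8 * ((4 / ε)⁻¹ * exp (-(4 / ε * s₀))) := by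
    simp only [hE1def]
    rw [MeasureTheory.integral_const_mul]
    have hcomp := integral_comp_mul_left_Ioi (fun x => exp (-x)) s₀
      (show (0:ℝ) < 4 / ε by positivity)
    simp only [smul_eq_mul] at hcomp
    rw [hcomp, integral_exp_neg_Ioi]
  have intE2 : ∫ s in Ioi s₀, E2 s = (12 * exp (-(2 / ε)) * ε ^ 4) * s₀⁻¹ := by
    simp only [hE2def]
    rw [MeasureTheory.integral_const_mul, integral_Ioi_rpow_of_lt (by norm_num) hs₀pos]
    norm_num
    rw [Real.rpow_neg_one]
    exact Or.inl rfl
  have hexp2 : exp (-(2 / ε)) ≤ ε ^ 2 / 7 := exp_neg_two_div_eps hε0 hε1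
  have hexp8 : exp (-(4 / ε * s₀)) ≤ 1 / (1 + 8 * ε) := by
    have h8 : 8 * ε ≤ 4 / ε * s₀ := by
      have heq : 4 / ε * (2 * ε ^ 2) = 8 * ε := by
        field_simp
        ring
      rw [← heq]
      exact mul_le_mul_of_nonneg_left hs₀ge (by positivity)
    calc exp (-(4 / ε * s₀)) ≤ exp (-(8 * ε)) := Real.exp_le_exp.2 (by linarith)
    _ ≤ 1 / (1 + 8 * ε) := by
        rw [Real.exp_neg, one_div]
        apply inv_anti₀ (by linarith)
        linarith [Real.add_one_le_exp (8 * ε)]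
  have hs₀inv : s₀⁻¹ ≤ (2 * ε ^ 2)⁻¹ := inv_anti₀ (by positivity) hs₀ge
  have final : s₀ + (8 * ((4 / ε)⁻¹ * exp (-(4 / ε * s₀))) +
      (12 * exp (-(2 / ε)) * ε ^ 4) * s₀⁻¹) ≤ 6 * ε := by
    have hinv4 : (4 / ε)⁻¹ = ε / 4 := by
      field_simp
    have e1 : 8 * ((4 / ε)⁻¹ * exp (-(4 / ε * s₀))) ≤ 2 * ε / (1 + 8 * ε) := by
      rw [hinv4]
      have h8 : (0:ℝ) < 1 + 8 * ε := by linarith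
      calc 8 * (ε / 4 * exp (-(4 / ε * s₀))) ≤ 8 * (ε / 4 * (1 / (1 + 8 * ε))) := by
            apply mul_le_mul_of_nonneg_left _ (by norm_num)
            apply mul_le_mul_of_nonneg_left hexp8 (by positivity)
      _ = 2 * ε / (1 + 8 * ε) := by ring
    have e2 : (12 * exp (-(2 / ε)) * ε ^ 4) * s₀⁻¹ ≤ 6 / 7 * ε ^ 4 := by
      calc (12 * exp (-(2 / ε)) * ε ^ 4) * s₀⁻¹
          ≤ (12 * (ε ^ 2 / 7) * ε ^ 4) * (2 * ε ^ 2)⁻¹ := by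
            apply mul_le_mul _ hs₀inv (by positivity) (by positivity)
            nlinarith [mul_le_mul_of_nonneg_right hexp2 (pow_nonneg hε0.le 4)]
      _ = 6 / 7 * ε ^ 4 := by
            field_simp
            ring
    have hden : (0:ℝ) < 1 + 8 * ε := by linarith
    have hfrac : 2 * ε / (1 + 8 * ε) ≤ 6 * ε - 4 * ε ^ 2 - 6 / 7 * ε ^ 4 := by
      rw [div_le_iff₀ hden]
      nlinarith [sq_nonneg ε, pow_nonneg hε0.le 3, pow_nonneg hε0.le 4, pow_nonneg hε0.le 5]
    linarith [e1, e2, hs₀le, hfrac]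
  calc (∫ s in Ioc (0:ℝ) s₀, B s) + ∫ s in Ioi s₀, B s
      ≤ s₀ + ((∫ s in Ioi s₀, E1 s) + ∫ s in Ioi s₀, E2 s) := by
        rw [int1]; linarith [int2]
  _ = s₀ + (8 * ((4 / ε)⁻¹ * exp (-(4 / ε * s₀))) +
      (12 * exp (-(2 / ε)) * ε ^ 4) * s₀⁻¹) := by rw [intE1, intE2]
  _ ≤ 6 * ε := final
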